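/- Let x₁ < x₂ < ⋯ < xₙ be points in [0,1) and μₙ = (1/n)∑ᵢ δ_{xᵢ} the associated empirical measure on the circle S¹. Let ν = Unif(S¹). Then W₂²(μₙ, ν) = (1/n)∑ᵢ xᵢ² − ((1/n)∑ᵢ xᵢ)² + (1/n²)∑ᵢ (n+1−2i) xᵢ + 1/12. -/

import Mathlib

open MeasureTheory

private lemma sum_range_cast_aux (n : ℕ) :
    ∑ k ∈ Finset.range n, (k : ℝ) = n * (n - 1) / 2 := by
  induction n with
  | zero => simp
  | succ m ih => rw [Finset.sum_range_succ, ih]; push_cast; ring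

private lemma sum_range_sq_cast_aux (n : ℕ) :
    ∑ k ∈ Finset.range n, (k : ℝ) ^ 2 = n * (n - 1) * (2 * n - 1) / 6 := by
  induction n with
  | zero => simp
  | succ m ih => rw [Finset.sum_range_succ, ih]; push_cast; ring

/-- Closed form of `W₂²(μₙ, Unif(S¹))` for an empirical measure of sorted points
`x₁ < ⋯ < xₙ` in `[0,1)`: the circular `W₂²` (infimum over shifts `α` of
`∫₀¹ (F⁻¹(t) − t − α)² dt`) equals
`(1/n)∑ xᵢ² − ((1/n)∑ xᵢ)² + (1/n²)∑ (n+1−2i) xᵢ + 1/12`. -/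
theorem stmt_1 (n : ℕ) (hn : 0 < n) (x : Fin n → ℝ) (hmono : StrictMono x)
    (hmem : ∀ i, x i ∈ Set.Ico (0:ℝ) 1)
    (Finv : ℝ → ℝ)
    (hF : ∀ i : Fin n, ∀ t ∈ Set.Ico ((i : ℝ) / n) (((i : ℝ) + 1) / n), Finv t = x i) :
    (⨅ α : ℝ, ∫ t in Set.Icc (0:ℝ) 1, (Finv t - t - α) ^ 2) =
      (∑ i, x i ^ 2) / n - ((∑ i, x i) / n) ^ 2
        + (∑ i : Fin n, ((n : ℝ) + 1 - 2 * ((i : ℝ) + 1)) * x i) / n ^ 2 + 1 / 12 := by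
  classical
  have hnpos : (0:ℝ) < n := by exact_mod_cast hn
  have hn0 : (n:ℝ) ≠ 0 := hnpos.ne'
  set y : ℕ → ℝ := fun k => if h : k < n then x ⟨k, h⟩ else 0 with hy
  have hyx : ∀ i : Fin n, y i = x i := by
    intro i; simp [hy, i.isLt]
  have hS1 : ∑ i : Fin n, x i = ∑ k ∈ Finset.range n, y k := by
    rw [← Fin.sum_univ_eq_sum_range]
    exact Finset.sum_congr rfl fun i _ => (hyx i).symm
  have hS2 : ∑ i : Fin n, x i ^ 2 = ∑ k ∈ Finset.range n, y k ^ 2 := by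
    rw [← Fin.sum_univ_eq_sum_range]
    exact Finset.sum_congr rfl fun i _ => by rw [hyx i]
  have hU : ∑ i : Fin n, ((n : ℝ) + 1 - 2 * ((i : ℝ) + 1)) * x i
      = ∑ k ∈ Finset.range n, ((n : ℝ) + 1 - 2 * ((k : ℝ) + 1)) * y k := by
    rw [← Fin.sum_univ_eq_sum_range (fun k => ((n : ℝ) + 1 - 2 * ((k : ℝ) + 1)) * y k)]
    exact Finset.sum_congr rfl fun i _ => by rw [hyx i]
  set S1 := ∑ k ∈ Finset.range n, y k with hS1def
  set S2 := ∑ k ∈ Finset.range n, y k ^ 2 with hS2def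
  set U := ∑ k ∈ Finset.range n, ((n : ℝ) + 1 - 2 * ((k : ℝ) + 1)) * y k with hUdef
  set m : ℝ := S1 / n - 1 / 2 with hm
  set K : ℝ := S2 / n - (S1 / n) ^ 2 + U / n ^ 2 + 1 / 12 with hK
  -- the key formula for the integral
  have key : ∀ α : ℝ,
      (∫ t in Set.Icc (0:ℝ) 1, (Finv t - t - α) ^ 2) = (α - m) ^ 2 + K := by
    intro α
    have hpoint : ∀ k, (hk : k < n) → ∀ t ∈ Set.Ico ((k:ℝ)/n) (((k:ℝ)+1)/n),
        Finv t = y k := by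
      intro k hk t ht
      rw [hF ⟨k, hk⟩ t ht, ← hyx ⟨k, hk⟩]
    -- per-interval facts
    have hab : ∀ k : ℕ, ((k:ℝ)/n) ≤ (((k:ℝ)+1)/n) := by
      intro k; exact (div_le_div_iff_of_pos_right hnpos).mpr (by linarith)
    have hint : ∀ k < n, IntervalIntegrable (fun t => (Finv t - t - α) ^ 2) volume
        ((k:ℝ)/n) (((k:ℝ)+1)/n) := by
      intro k hk
      rw [intervalIntegrable_iff_integrableOn_Ioc_of_le (hab k),
        integrableOn_Ioc_iff_integrableOn_Ioo]
      have hg : IntegrableOn (fun t : ℝ => (y k - t - α) ^ 2)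
          (Set.Ioo ((k:ℝ)/n) (((k:ℝ)+1)/n)) volume := by
        exact ((by fun_prop : Continuous fun t : ℝ => (y k - t - α) ^ 2).integrableOn_Icc).mono_set Set.Ioo_subset_Icc_self
      exact hg.congr_fun
        (fun t ht => by rw [hpoint k hk t (Set.Ioo_subset_Ico_self ht)])
        measurableSet_Ioo
    have hval : ∀ k < n, (∫ t in ((k:ℝ)/n)..(((k:ℝ)+1)/n), (Finv t - t - α) ^ 2)
        = (y k - α) ^ 2 / n - ((2*(k:ℝ)+1)/n^2) * (y k - α)
          + (((k:ℝ)+1)^3 - (k:ℝ)^3) / (3*n^3) := by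
      intro k hk
      have h1 : (∫ t in ((k:ℝ)/n)..(((k:ℝ)+1)/n), (Finv t - t - α) ^ 2)
          = ∫ t in ((k:ℝ)/n)..(((k:ℝ)+1)/n), (y k - t - α) ^ 2 := by
        rw [intervalIntegral.integral_of_le (hab k),
          intervalIntegral.integral_of_le (hab k),
          integral_Ioc_eq_integral_Ioo, integral_Ioc_eq_integral_Ioo]
        exact setIntegral_congr_fun measurableSet_Ioo
          (fun t ht => by rw [hpoint k hk t (Set.Ioo_subset_Ico_self ht)])
      rw [h1]
      set c : ℝ := y k - α with hc
      have hderiv : ∀ t ∈ Set.uIcc ((k:ℝ)/n) (((k:ℝ)+1)/n),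
          HasDerivAt (fun s : ℝ => -(c - s) ^ 3 / 3) ((c - t - 0) ^ 2) t := by
        intro t _
        have h1 : HasDerivAt (fun s : ℝ => c - s) (-1) t :=
          (hasDerivAt_id t).const_sub c
        have h2 := (h1.pow 3).div_const 3
        have h3 := h2.neg
        have e : (fun s : ℝ => -(c - s) ^ 3 / 3) = (-fun x => ((fun s => c - s) ^ 3) x / 3) := by
          funext s; simp only [Pi.neg_apply, Pi.pow_apply]; ring
        rw [e]
        exact h3.congr_deriv (by rw [show (3:ℕ) - 1 = 2 from rfl]; push_cast; ring)
      have hII : IntervalIntegrable (fun t : ℝ => (c - t - 0) ^ 2) volume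
          ((k:ℝ)/n) (((k:ℝ)+1)/n) := (by fun_prop : Continuous fun t : ℝ => (c - t - 0)^2).intervalIntegrable _ _
      have h2 := intervalIntegral.integral_eq_sub_of_hasDerivAt hderiv hII
      have h3 : (∫ t in ((k:ℝ)/n)..(((k:ℝ)+1)/n), (y k - t - α) ^ 2)
          = ∫ t in ((k:ℝ)/n)..(((k:ℝ)+1)/n), (c - t - 0) ^ 2 := by
        congr 1; ext t; rw [hc]; ring
      rw [h3, h2, hc]
      field_simp
      ring
    -- assemble
    have hicc : (∫ t in Set.Icc (0:ℝ) 1, (Finv t - t - α) ^ 2)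
        = ∫ t in (0:ℝ)..1, (Finv t - t - α) ^ 2 := by
      rw [intervalIntegral.integral_of_le zero_le_one, integral_Icc_eq_integral_Ioc]
    have hsplit := intervalIntegral.sum_integral_adjacent_intervals
      (f := fun t => (Finv t - t - α) ^ 2) (μ := volume) (a := fun k : ℕ => (k:ℝ)/n)
      (n := n) (fun k hk => by exact_mod_cast hint k hk)
    have ha0 : ((0:ℕ):ℝ)/n = 0 := by simp
    have han : ((n:ℕ):ℝ)/n = 1 := by field_simp
    rw [hicc, ← show ((0:ℕ):ℝ)/(n:ℝ) = 0 from ha0, ← show ((n:ℕ):ℝ)/(n:ℝ) = 1 from han,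
      ← hsplit]
    have hterm : ∀ k ∈ Finset.range n,
        (∫ t in (((k:ℕ):ℝ)/n)..((((k+1):ℕ):ℝ)/n), (Finv t - t - α) ^ 2)
        = (1/(n:ℝ)) * (y k)^2 + (-2*α/n - (2*(k:ℝ)+1)/n^2) * y k
          + ((1/n^3) * (k:ℝ)^2 + (2*α/n^2 + 1/n^3) * (k:ℝ)
            + (α/n^2 + α^2/n + 1/(3*n^3))) := by
      intro k hk
      rw [Finset.mem_range] at hk
      have := hval k hk
      rw [show (((k+1):ℕ):ℝ) = (k:ℝ)+1 by push_cast; ring, this]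
      field_simp
      ring
    have hTU : ∑ k ∈ Finset.range n, (2*(k:ℝ)+1)/n^2 * y k
        = ((n:ℝ) * S1 - U) / n ^ 2 := by
      have : ∀ k ∈ Finset.range n, (2*(k:ℝ)+1)/n^2 * y k
          = ((n:ℝ) * y k - ((n : ℝ) + 1 - 2 * ((k : ℝ) + 1)) * y k) / n ^ 2 := by
        intro k _; field_simp; ring
      rw [Finset.sum_congr rfl this, ← Finset.sum_div, Finset.sum_sub_distrib,
        ← Finset.mul_sum, hS1def, hUdef]
    have hsum2 : ∑ k ∈ Finset.range n, (-2*α/n - (2*(k:ℝ)+1)/n^2) * y k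
        = -2*α/n * S1 - ((n:ℝ) * S1 - U) / n ^ 2 := by
      have : ∀ k ∈ Finset.range n, (-2*α/n - (2*(k:ℝ)+1)/n^2) * y k
          = (-2*α/n) * y k - (2*(k:ℝ)+1)/n^2 * y k := by intro k _; ring
      rw [Finset.sum_congr rfl this, Finset.sum_sub_distrib, ← Finset.mul_sum, hTU,
        hS1def]
    rw [Finset.sum_congr rfl hterm]
    rw [Finset.sum_add_distrib, Finset.sum_add_distrib, Finset.sum_add_distrib,
      Finset.sum_add_distrib, hsum2, ← Finset.mul_sum, ← Finset.mul_sum, ← Finset.mul_sum,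
      Finset.sum_const, Finset.card_range, nsmul_eq_mul,
      sum_range_cast_aux, sum_range_sq_cast_aux, ← hS2def, hm, hK]
    field_simp
    ring
  -- compute the infimum of a shifted parabola
  have hbdd : BddBelow (Set.range fun α : ℝ =>
      ∫ t in Set.Icc (0:ℝ) 1, (Finv t - t - α) ^ 2) := by
    refine ⟨K, ?_⟩
    rintro _ ⟨α, rfl⟩
    exact (by nlinarith [sq_nonneg (α - m)] : K ≤ (α - m) ^ 2 + K).trans_eq (key α).symm
  have hinf : (⨅ α : ℝ, ∫ t in Set.Icc (0:ℝ) 1, (Finv t - t - α) ^ 2) = K := by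
    apply le_antisymm
    · calc (⨅ α : ℝ, ∫ t in Set.Icc (0:ℝ) 1, (Finv t - t - α) ^ 2)
          ≤ ∫ t in Set.Icc (0:ℝ) 1, (Finv t - t - m) ^ 2 := ciInf_le hbdd m
        _ = K := by rw [key m]; simp
    · exact le_ciInf fun α =>
        (by nlinarith [sq_nonneg (α - m)] : K ≤ (α - m) ^ 2 + K).trans_eq (key α).symm
  rw [hinf, hK, hS1, hS2, hU]
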